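/- Let V be a complex vector space of countable dimension and S ⊆ End(V) a set of operators acting irreducibly (the only S-invariant subspaces are 0 and V). If T ∈ End(V) commutes with every element of S, then T is a scalar multiple of the identity. -/

import Mathlib

open Polynomial Cardinal

/-- If `T - c • 1` is injective for every `c`, then `aeval T q` is injective
for every polynomial `q` all of whose factors are injective. -/
lemma aux_aeval_multiset_injective {V : Type*} [AddCommGroup V] [Module ℂ V]
    (T : Module.End ℂ V) (m : Multiset ℂ[X])
    (h : ∀ p ∈ m, Function.Injective (Polynomial.aeval T p)) :
    Function.Injective (Polynomial.aeval T m.prod) := by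
  induction m using Multiset.induction with
  | empty => simpa [Module.End.coe_one] using Function.injective_id
  | cons a s ih =>
      rw [Multiset.prod_cons, map_mul]
      have ha : Function.Injective (Polynomial.aeval T a) := h a (Multiset.mem_cons_self a s)
      have hs : Function.Injective (Polynomial.aeval T s.prod) :=
        ih (fun p hp => h p (Multiset.mem_cons_of_mem hp))
      intro x y hxy
      simp only [Module.End.mul_apply] at hxy
      exact hs (ha hxy)

/-- If `T - c • 1` is injective for every `c`, then `aeval T q` is injective
for every nonzero polynomial `q`. -/
lemma aux_aeval_injective {V : Type*} [AddCommGroup V] [Module ℂ V]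
    (T : Module.End ℂ V)
    (hinj : ∀ c : ℂ, Function.Injective ((T - c • 1 : Module.End ℂ V)))
    (q : ℂ[X]) (hq : q ≠ 0) : Function.Injective (Polynomial.aeval T q) := by
  have hsplit : q = C q.leadingCoeff * (q.roots.map fun a => X - C a).prod :=
    (IsAlgClosed.splits q).eq_prod_roots
  have hlc : q.leadingCoeff ≠ 0 := leadingCoeff_ne_zero.mpr hq
  intro x y hxy
  conv at hxy => rw [hsplit]
  rw [map_mul] at hxy
  simp only [Module.End.mul_apply] at hxy
  have hsm : Function.Injective (Polynomial.aeval T (C q.leadingCoeff)) := by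
    rw [aeval_C, Algebra.algebraMap_eq_smul_one]
    intro u w huw
    simp only [LinearMap.smul_apply, Module.End.one_apply] at huw
    exact smul_right_injective V hlc huw
  have hprod : Function.Injective
      (Polynomial.aeval T ((q.roots.map fun a => X - C a).prod)) := by
    apply aux_aeval_multiset_injective
    intro p hp
    obtain ⟨a, _, rfl⟩ := Multiset.mem_map.mp hp
    have : (Polynomial.aeval T (X - C a)) = (T - a • 1 : Module.End ℂ V) := by
      simp [Algebra.algebraMap_eq_smul_one]
    rw [this]
    exact hinj a
  exact hprod (hsm hxy)

theorem stmt_18 {V : Type*} [AddCommGroup V] [Module ℂ V]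
    (hV : ∃ s : Set V, s.Countable ∧ Submodule.span ℂ s = ⊤)
    (S : Set (Module.End ℂ V))
    (hirr : ∀ W : Submodule ℂ V, (∀ f ∈ S, ∀ x ∈ W, f x ∈ W) → W = ⊥ ∨ W = ⊤)
    (T : Module.End ℂ V) (hT : ∀ f ∈ S, T * f = f * T) :
    ∃ c : ℂ, T = c • (1 : Module.End ℂ V) := by
  obtain ⟨s, hs, hspan⟩ := hV
  -- trivial case
  by_cases hV0 : Subsingleton V
  · refine ⟨0, ?_⟩
    ext x
    exact Subsingleton.elim _ _
  have : Nontrivial V := not_subsingleton_iff_nontrivial.mp hV0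
  by_contra hcon
  push_neg at hcon
  -- each T - c • 1 commutes with S and is nonzero, hence bijective
  have hcomm : ∀ c : ℂ, ∀ f ∈ S, (T - c • 1) * f = f * (T - c • 1) := by
    intro c f hf
    have h1 : (c • (1 : Module.End ℂ V)) * f = f * (c • 1) := by
      simp [mul_smul_comm, smul_mul_assoc]
    rw [sub_mul, mul_sub, hT f hf, h1]
  have hne : ∀ c : ℂ, T - c • 1 ≠ 0 := by
    intro c h
    exact hcon c (by rwa [sub_eq_zero] at h)
  have hbij : ∀ c : ℂ, Function.Bijective ((T - c • 1 : Module.End ℂ V)) := by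
    intro c
    set U : Module.End ℂ V := T - c • 1 with hU
    have hker : LinearMap.ker U = ⊥ := by
      rcases hirr (LinearMap.ker U) (fun f hf x hx => by
        have : (U * f) x = (f * U) x := by rw [hcomm c f hf]
        simp only [Module.End.mul_apply] at this
        rw [LinearMap.mem_ker] at hx ⊢
        rw [this, hx, map_zero]) with h | h
      · exact h
      · exact absurd (LinearMap.ker_eq_top.mp h) (hne c)
    have hrange : LinearMap.range U = ⊤ := by
      rcases hirr (LinearMap.range U) (fun f hf x hx => by
        obtain ⟨y, rfl⟩ := hx
        exact ⟨f y, by have : (U * f) y = (f * U) y := by rw [hcomm c f hf]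
                       simpa using this⟩) with h | h
      · exact absurd (LinearMap.range_eq_bot.mp h) (hne c)
      · exact h
    exact ⟨LinearMap.ker_eq_bot.mp hker, LinearMap.range_eq_top.mp hrange⟩
  have hinj : ∀ c : ℂ, Function.Injective ((T - c • 1 : Module.End ℂ V)) := fun c => (hbij c).1
  -- pick a nonzero vector
  obtain ⟨v, hv⟩ := exists_ne (0 : V)
  -- resolvent vectors
  choose g hg using fun c : ℂ => (hbij c).2 v
  -- these vectors are linearly independent
  have hli : LinearIndependent ℂ g := by
    rw [linearIndependent_iff']
    intro t a hsum c₀ hc₀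
    -- define the polynomial q
    set P : Finset ℂ → ℂ[X] := fun u => ∏ c ∈ u, (X - C c) with hP
    set q : ℂ[X] := ∑ c ∈ t, C (a c) * P (t.erase c) with hq
    have key : (Polynomial.aeval T q) v = 0 := by
      have h1 : ∀ c ∈ t, (Polynomial.aeval T (P t)) (g c) =
          (Polynomial.aeval T (P (t.erase c))) v := by
        intro c hc
        have : P t = P (t.erase c) * (X - C c) := by
          simp only [hP]
          exact (Finset.prod_erase_mul t _ hc).symm
        rw [this, map_mul, Module.End.mul_apply]
        congr 1
        have : (Polynomial.aeval T (X - C c)) (g c) = (T - c • 1) (g c) := by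
          simp [Algebra.algebraMap_eq_smul_one]
        rw [this, hg c]
      have h2 : (Polynomial.aeval T (P t)) (∑ c ∈ t, a c • g c) = 0 := by
        rw [hsum, map_zero]
      rw [map_sum] at h2
      have h3 : ∀ c ∈ t, (Polynomial.aeval T (P t)) (a c • g c) =
          a c • (Polynomial.aeval T (P (t.erase c))) v := by
        intro c hc
        rw [map_smul, h1 c hc]
      rw [Finset.sum_congr rfl h3] at h2
      rw [hq, map_sum]
      rw [LinearMap.sum_apply]
      rw [← h2]
      apply Finset.sum_congr rfl
      intro c hc
      rw [map_mul, Module.End.mul_apply, aeval_C, Algebra.algebraMap_eq_smul_one]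
      simp [LinearMap.smul_apply]
    -- q must be zero, else aeval T q injective gives v = 0
    have hq0 : q = 0 := by
      by_contra hqne
      have := aux_aeval_injective T hinj q hqne
      have : v = 0 := by
        apply this
        rw [key, map_zero]
      exact hv this
    -- evaluate q at c₀
    have heval : q.eval c₀ = a c₀ * ∏ c ∈ t.erase c₀, (c₀ - c) := by
      rw [hq, eval_finset_sum]
      rw [Finset.sum_eq_single c₀]
      · simp [hP, eval_prod]
      · intro b hb hbne
        have : (P (t.erase b)).eval c₀ = 0 := by
          rw [hP]
          simp only [eval_prod, eval_sub, eval_X, eval_C]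
          apply Finset.prod_eq_zero (Finset.mem_erase.mpr ⟨Ne.symm hbne, hc₀⟩)
          ring
        simp [this]
      · intro h
        exact absurd hc₀ h
    have hprodne : (∏ c ∈ t.erase c₀, (c₀ - c)) ≠ 0 := by
      apply Finset.prod_ne_zero_iff.mpr
      intro c hc
      have := (Finset.mem_erase.mp hc).1
      exact sub_ne_zero.mpr (Ne.symm this)
    rw [hq0] at heval
    simp only [eval_zero] at heval
    exact (mul_eq_zero.mp heval.symm).resolve_right hprodne
  -- cardinality contradiction
  have hcard := hli.cardinal_lift_le_rank
  have hrank : Module.rank ℂ V ≤ ℵ₀ := by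
    have h1 : Module.rank ℂ (Submodule.span ℂ s) ≤ #s := rank_span_le s
    rw [hspan] at h1
    rw [rank_top] at h1
    exact h1.trans hs.le_aleph0
  have : (𝔠 : Cardinal) ≤ ℵ₀ := by
    have := hcard.trans (Cardinal.lift_le.mpr hrank)
    rw [mk_complex] at this
    simpa using this
  exact absurd this (not_le.mpr aleph0_lt_continuum)
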